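/- For a monic cubic polynomial s³ + a₂s² + a₁s + a₀ with real coefficients, all roots have strictly negative real part if and only if a₂ > 0, a₀ > 0, and a₂a₁ > a₀ (Routh–Hurwitz criterion for n = 3). -/
import Mathlib

lemma cubic_real_root (a₀ a₁ a₂ : ℝ) : ∃ α : ℝ, α^3 + a₂*α^2 + a₁*α + a₀ = 0 := by
  set M : ℝ := 1 + |a₂| + |a₁| + |a₀| with hMdef
  have h2' := abs_nonneg a₂
  have h1' := abs_nonneg a₁
  have h0' := abs_nonneg a₀
  have hM : 1 ≤ M := by simp [hMdef]; linarith
  have hle : (-M) ≤ M := by linarith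
  set f : ℝ → ℝ := fun x => x^3 + a₂*x^2 + a₁*x + a₀ with hf
  have hcont : ContinuousOn f (Set.Icc (-M) M) := by fun_prop
  have e2 : a₂*M^2 ≤ |a₂| *M^2 := by
    apply mul_le_mul_of_nonneg_right (le_abs_self a₂); positivity
  have e2' : -( |a₂| *M^2) ≤ a₂*M^2 := by
    nlinarith [neg_abs_le a₂, sq_nonneg M]
  have e1 : a₁*M ≤ |a₁| *M := by
    apply mul_le_mul_of_nonneg_right (le_abs_self a₁); linarith
  have e1' : -( |a₁| *M) ≤ a₁*M := by
    nlinarith [neg_abs_le a₁]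
  have h1 : f (-M) ≤ 0 := by
    simp only [hf]
    nlinarith [le_abs_self a₀, neg_abs_le a₀, sq_nonneg M, mul_nonneg (mul_nonneg h2' h2') h2']
  have h2 : 0 ≤ f M := by
    simp only [hf]
    nlinarith [le_abs_self a₀, neg_abs_le a₀, sq_nonneg M]
  have := intermediate_value_Icc hle hcont ⟨h1, h2⟩
  obtain ⟨α, _, hα⟩ := this
  exact ⟨α, hα⟩

lemma quad_iff (b c : ℝ) :
    (∀ z : ℂ, z^2 + (b:ℂ)*z + (c:ℂ) = 0 → z.re < 0) ↔ 0 < b ∧ 0 < c := by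
  constructor
  · intro h
    by_contra hbc
    push_neg at hbc
    rcases le_or_gt (4*c) (b^2) with hd | hd
    · -- real roots
      set t := Real.sqrt (b^2 - 4*c) with htdef
      have ht : t^2 = b^2 - 4*c := Real.sq_sqrt (by linarith)
      have ht0 : 0 ≤ t := Real.sqrt_nonneg _
      set x : ℝ := (-b + t)/2 with hxdef
      have hroot : x^2 + b*x + c = 0 := by
        rw [hxdef]; ring_nf; nlinarith [ht]
      have hx0 : 0 ≤ x := by
        rcases le_or_gt b 0 with hb | hb
        · rw [hxdef]; linarith
        · have hc := hbc hb
          have : |b| ≤ t := by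
            rw [htdef, ← Real.sqrt_sq_eq_abs]
            exact Real.sqrt_le_sqrt (by linarith)
          have := le_abs_self b
          rw [hxdef]; linarith
      have : ((x:ℂ))^2 + (b:ℂ)*x + c = 0 := by
        have : ((x^2 + b*x + c : ℝ) : ℂ) = 0 := by rw [hroot]; norm_num
        exact_mod_cast this
      have := h x this
      simp at this
      linarith
    · -- complex roots, re = -b/2
      have hc : 0 < c := by nlinarith [sq_nonneg b]
      have hb : b ≤ 0 := by
        by_contra hb
        push_neg at hb
        exact absurd hc (not_lt.mpr (hbc hb))
      set t := Real.sqrt (4*c - b^2) with htdef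
      have ht : t^2 = 4*c - b^2 := Real.sq_sqrt (by linarith)
      set z : ℂ := Complex.mk (-b/2) (t/2) with hzdef
      have hre : z.re = -b/2 := rfl
      have him : z.im = t/2 := rfl
      have hroot : z^2 + (b:ℂ)*z + c = 0 := by
        apply Complex.ext
        · simp [pow_two, Complex.mul_re, Complex.add_re, hre, him]
          nlinarith [ht]
        · simp [pow_two, Complex.mul_im, Complex.add_im, hre, him]
          ring
      have := h z hroot
      rw [hre] at this
      linarith
  · rintro ⟨hb, hc⟩ z hz
    have hre := congrArg Complex.re hz
    have him := congrArg Complex.im hz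
    simp [pow_two, Complex.mul_re, Complex.mul_im, Complex.add_re, Complex.add_im] at hre him
    set x := z.re
    set y := z.im
    rcases eq_or_ne y 0 with hy | hy
    · rw [hy] at hre
      by_contra hx
      push_neg at hx
      nlinarith [hre]
    · have hx : x = -b/2 := by
        have : y * (2*x + b) = 0 := by nlinarith [him]
        rcases mul_eq_zero.mp this with h | h
        · exact absurd h hy
        · linarith
      rw [hx]; linarith

theorem routh_hurwitz_deg_three (a₀ a₁ a₂ : ℝ) :
    (∀ z : ℂ, z ^ 3 + (a₂ : ℂ) * z ^ 2 + (a₁ : ℂ) * z + (a₀ : ℂ) = 0 → z.re < 0) ↔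
      (0 < a₂ ∧ 0 < a₀ ∧ a₂ * a₁ > a₀) := by
  obtain ⟨α, hα⟩ := cubic_real_root a₀ a₁ a₂
  set b : ℝ := a₂ + α with hbdef
  set c : ℝ := a₁ + α * b with hcdef
  have h0 : a₀ = -α * c := by rw [hcdef, hbdef]; nlinarith [hα]
  have key : ∀ z : ℂ, z ^ 3 + (a₂:ℂ) * z ^ 2 + (a₁:ℂ) * z + (a₀:ℂ)
      = (z - α) * (z^2 + (b:ℂ)*z + (c:ℂ)) := by
    intro z
    have hb' : (b:ℂ) = (a₂:ℂ) + (α:ℂ) := by rw [hbdef]; push_cast; ring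
    have hc' : (c:ℂ) = (a₁:ℂ) + (α:ℂ) * (b:ℂ) := by rw [hcdef]; push_cast; ring
    have h0' : (a₀:ℂ) = -(α:ℂ) * (c:ℂ) := by rw [h0]; push_cast; ring
    linear_combination (-(z^2)) * hb' - z * hc' + h0'
  have split : (∀ z : ℂ, z ^ 3 + (a₂:ℂ) * z ^ 2 + (a₁:ℂ) * z + (a₀:ℂ) = 0 → z.re < 0)
      ↔ (α < 0 ∧ (0 < b ∧ 0 < c)) := by
    rw [← quad_iff]
    constructor
    · intro h
      constructor
      · have := h α (by rw [key]; simp)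
        simpa using this
      · intro z hz
        apply h z
        rw [key, hz, mul_zero]
    · rintro ⟨hα0, hq⟩ z hz
      rw [key] at hz
      rcases mul_eq_zero.mp hz with h | h
      · have : z = (α:ℂ) := by linear_combination h
        rw [this]; simpa using hα0
      · exact hq z h
  rw [split]
  constructor
  · rintro ⟨hα0, hb, hc⟩
    refine ⟨by linarith [hbdef], by nlinarith [h0], ?_⟩
    have hid : a₂ * a₁ - a₀ = b * (c + α^2 - α*b) := by
      rw [h0, hcdef, hbdef]; ring
    nlinarith [hid, mul_pos hb hc, mul_nonneg hb.le (sq_nonneg α), mul_pos (mul_pos (neg_pos.mpr hα0) hb) hb]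
  · rintro ⟨h2, hh0, hh⟩
    have h1 : 0 < a₁ := by nlinarith
    have hα0 : α < 0 := by
      rcases lt_trichotomy α 0 with h | h | h
      · exact h
      · exfalso; rw [h] at hα; simp at hα; linarith
      · exfalso; nlinarith [hα]
    have hc : 0 < c := by nlinarith [h0]
    have hb : 0 < b := by
      have hid : a₂ * a₁ - a₀ = b * (a₁ + α^2) := by
        rw [h0, hcdef, hbdef]; ring
      nlinarith [sq_nonneg α]
    exact ⟨hα0, hb, hc⟩
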